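/- Let n ≥ 1 and let f, g be permutations of [n] that generate the full symmetric group Sym(n). Let G be the HRG with single nonterminal S, single terminal a, type(S) = type(a) = [n], and the three productions p(f), p(g), and S → a•. Then L(G) = {F(a,h) | h ∈ Sym(n)}; moreover F(a,h) and F(a,h′) are isomorphic if and only if h = h′, so L(G) contains exactly n! pairwise non-isomorphic hypergraphs, while G has only 3 productions. -/

import Mathlib

namespace HRGPaper

universe u

/-- A hypergraph over a `Finset ℕ`-typed alphabet `C` with typing function `tc`. -/
structure Hypergraph (C : Type u) (tc : C → Finset ℕ) : Type (max u 1) where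
  V : Type
  E : Type
  finV : Finite V
  finE : Finite E
  lab : E → C
  att : (e : E) → (σ : ℕ) → σ ∈ tc (lab e) → V
  extType : Finset ℕ
  ext : (σ : ℕ) → σ ∈ extType → V

variable {C : Type u} {tc : C → Finset ℕ}

/-- An isomorphism of hypergraphs. -/
structure HIso (H K : Hypergraph C tc) where
  vE : H.V ≃ K.V
  eE : H.E ≃ K.E
  lab_eq : ∀ e, K.lab (eE e) = H.lab e
  att_eq : ∀ (e : H.E) (σ : ℕ) (h : σ ∈ tc (H.lab e)) (h' : σ ∈ tc (K.lab (eE e))),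
    K.att (eE e) σ h' = vE (H.att e σ h)
  extType_eq : K.extType = H.extType
  ext_eq : ∀ (σ : ℕ) (h : σ ∈ H.extType) (h' : σ ∈ K.extType),
    K.ext σ h' = vE (H.ext σ h)

/-- Two hypergraphs are isomorphic. -/
def IsIso (H K : Hypergraph C tc) : Prop := Nonempty (HIso H K)

/-- The handle `c•` of a label `c`. -/
def handle (c : C) : Hypergraph C tc where
  V := {σ : ℕ // σ ∈ tc c}
  E := PUnit
  finV := inferInstance
  finE := inferInstance
  lab := fun _ => c
  att := fun _ σ h => ⟨σ, h⟩
  extType := tc c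
  ext := fun σ h => ⟨σ, h⟩

/-- The gluing relation used for hyperedge replacement: the attachment node of `e`
with selector `σ` gets identified with the external node of `K` with selector `σ`. -/
def glueRel (H : Hypergraph C tc) (e : H.E) (K : Hypergraph C tc) :
    (H.V ⊕ K.V) → (H.V ⊕ K.V) → Prop := fun x y =>
  ∃ (σ : ℕ) (h : σ ∈ tc (H.lab e)) (h' : σ ∈ K.extType),
    x = Sum.inl (H.att e σ h) ∧ y = Sum.inr (K.ext σ h')

/-- The replacement `H[e/K]` of the hyperedge `e` in `H` by the hypergraph `K`. -/
def replace (H : Hypergraph C tc) (e : H.E) (K : Hypergraph C tc) : Hypergraph C tc where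
  V := Quot (glueRel H e K)
  E := {e' : H.E // e' ≠ e} ⊕ K.E
  finV := by haveI := H.finV; haveI := K.finV; infer_instance
  finE := by haveI := H.finE; haveI := K.finE; infer_instance
  lab := Sum.elim (fun e' => H.lab e'.1) K.lab
  att := fun e' => Sum.rec (motive := fun e' => (σ : ℕ) →
      σ ∈ tc (Sum.elim (fun e'' : {e' : H.E // e' ≠ e} => H.lab e''.1) K.lab e') →
      Quot (glueRel H e K))
    (fun e₀ σ h => Quot.mk _ (Sum.inl (H.att e₀.1 σ h)))
    (fun eK σ h => Quot.mk _ (Sum.inr (K.att eK σ h))) e'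
  extType := H.extType
  ext := fun σ h => Quot.mk _ (Sum.inl (H.ext σ h))

/-- A hyperedge replacement grammar over the typed alphabet `C`; `isNT` singles out the
nonterminal labels, the remaining labels being terminal. -/
structure HRG (C : Type u) (tc : C → Finset ℕ) where
  isNT : C → Prop
  finC : Finite C
  P : Set (C × Hypergraph C tc)
  finP : P.Finite
  lhs_nt : ∀ p ∈ P, isNT p.1
  rhs_type : ∀ p ∈ P, p.2.extType = tc p.1
  S : C
  S_nt : isNT S

/-- One derivation step of an HRG: replace a hyperedge labeled by the left-hand side of a
production with the right-hand side of that production. -/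
def Step (Γ : HRG C tc) (H H' : Hypergraph C tc) : Prop :=
  ∃ (e : H.E) (p : C × Hypergraph C tc), p ∈ Γ.P ∧ H.lab e = p.1 ∧ H' = replace H e p.2

/-- The derivability relation `⇒*` of an HRG. -/
def Derives (Γ : HRG C tc) : Hypergraph C tc → Hypergraph C tc → Prop :=
  Relation.ReflTransGen (Step Γ)

/-- Derivability in exactly `k` steps. -/
inductive DerivesIn (Γ : HRG C tc) : ℕ → Hypergraph C tc → Hypergraph C tc → Prop
  | refl (H : Hypergraph C tc) : DerivesIn Γ 0 H H
  | tail {k H H' H''} : DerivesIn Γ k H H' → Step Γ H' H'' → DerivesIn Γ (k + 1) H H''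

/-- The language of an HRG: all hypergraphs with terminal labels only that are isomorphic to a
hypergraph derivable from the handle of the start symbol (i.e. the language is considered
up to isomorphism). -/
def Lang (Γ : HRG C tc) : Set (Hypergraph C tc) :=
  {H | (∀ e : H.E, ¬ Γ.isNT (H.lab e)) ∧ ∃ H', Derives Γ (handle Γ.S) H' ∧ IsIso H' H}

/-- The string graph of the word `w`. -/
def SG (w : List C) : Hypergraph C tc where
  V := Fin (w.length + 1)
  E := Fin w.length
  finV := inferInstance
  finE := inferInstance
  lab := fun i => w.get i
  att := fun i σ _ => if σ = 1 then i.castSucc else i.succ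
  extType := {1, 2}
  ext := fun σ _ => if σ = 1 then 0 else Fin.last w.length

/-- An HRG is string-generating if every hypergraph of its language is a string graph. -/
def IsStringGenerating (Γ : HRG C tc) : Prop :=
  ∀ H ∈ Lang Γ, ∃ w : List C, IsIso H (SG w)

/-- A hypergraph is repetition-free if its external map and all its attachment maps
are injective. -/
def RepFree (H : Hypergraph C tc) : Prop :=
  (∀ (σ₁ σ₂ : ℕ) (h₁ : σ₁ ∈ H.extType) (h₂ : σ₂ ∈ H.extType),
      H.ext σ₁ h₁ = H.ext σ₂ h₂ → σ₁ = σ₂) ∧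
  (∀ (e : H.E) (σ₁ σ₂ : ℕ) (h₁ : σ₁ ∈ tc (H.lab e)) (h₂ : σ₂ ∈ tc (H.lab e)),
      H.att e σ₁ h₁ = H.att e σ₂ h₂ → σ₁ = σ₂)

/-- An HRG is repetition-free if all right-hand sides of its productions are repetition-free. -/
def RepFreeGrammar (Γ : HRG C tc) : Prop := ∀ p ∈ Γ.P, RepFree p.2

/-- The size of a hypergraph: number of nodes plus number of hyperedges plus the total number
of attachment nodes of its hyperedges. -/
noncomputable def hgSize (D : Hypergraph C tc) : ℕ :=
  Nat.card D.V + Nat.card D.E + Nat.card ((e : D.E) × {σ : ℕ // σ ∈ tc (D.lab e)})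

/-- The size of a production. -/
noncomputable def prodSize (p : C × Hypergraph C tc) : ℕ :=
  (tc p.1).card + hgSize p.2

/-- The size of an HRG. -/
noncomputable def hrgSize (Γ : HRG C tc) : ℕ :=
  ∑ p ∈ Γ.finP.toFinset, prodSize p

/-- The hypergraph `F(X, f)`: nodes `[n] = {1,…,n}`, a single hyperedge labeled `X`
whose attachment node for selector `j` is `f j`, and all nodes external via `ext j = j`. -/
def Fgraph (X : C) (n : ℕ) (hX : tc X = Finset.Icc 1 n) (f : ℕ → ℕ)
    (hf : ∀ j ∈ Finset.Icc 1 n, f j ∈ Finset.Icc 1 n) : Hypergraph C tc where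
  V := {j : ℕ // j ∈ Finset.Icc 1 n}
  E := PUnit
  finV := inferInstanceAs (Finite ↥(Finset.Icc 1 n))
  finE := inferInstance
  lab := fun _ => X
  att := fun _ σ h => ⟨f σ, hf σ (hX ▸ h)⟩
  extType := Finset.Icc 1 n
  ext := fun σ h => ⟨σ, h⟩

/-- A node is external if it is in the range of the external map. -/
def IsExternal (H : Hypergraph C tc) (v : H.V) : Prop :=
  ∃ (σ : ℕ) (h : σ ∈ H.extType), H.ext σ h = v

/-- A permutation of `[n] = {1,…,n}` viewed as a function `ℕ → ℕ` (identity off `[n]`). -/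
def permToFun {n : ℕ} (π : Equiv.Perm {j : ℕ // j ∈ Finset.Icc 1 n}) : ℕ → ℕ :=
  fun j => if h : j ∈ Finset.Icc 1 n then (π ⟨j, h⟩).1 else j

theorem permToFun_mem {n : ℕ} (π : Equiv.Perm {j : ℕ // j ∈ Finset.Icc 1 n}) :
    ∀ j ∈ Finset.Icc 1 n, permToFun π j ∈ Finset.Icc 1 n := by
  intro j hj
  simp only [permToFun, dif_pos hj]
  exact (π ⟨j, hj⟩).2

/-- The HRG of Example `all permutations`: labels `Bool` (nonterminal `S = true`,
terminal `a = false`, both of type `[n]`), productions `p(f)`, `p(g)` and `S → a•`. -/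
def permGrammar (n : ℕ) (f g : Equiv.Perm {j : ℕ // j ∈ Finset.Icc 1 n}) :
    HRG Bool (fun _ => Finset.Icc 1 n) where
  isNT := fun c => c = true
  finC := inferInstance
  P := {((true : Bool), Fgraph true n rfl (permToFun f) (permToFun_mem f)),
        ((true : Bool), Fgraph true n rfl (permToFun g) (permToFun_mem g)),
        ((true : Bool), handle false)}
  finP := (Set.finite_singleton _).insert _ |>.insert _
  lhs_nt := by
    rintro p hp
    rcases hp with rfl | rfl | rfl <;> rfl
  rhs_type := by
    rintro p hp
    rcases hp with rfl | rfl | rfl <;> rfl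
  S := true
  S_nt := rfl
section Aux
variable {C : Type u} {tc : C → Finset ℕ}

def HIso.refl (H : Hypergraph C tc) : HIso H H where
  vE := Equiv.refl _
  eE := Equiv.refl _
  lab_eq := fun _ => rfl
  att_eq := fun _ _ _ _ => rfl
  extType_eq := rfl
  ext_eq := fun _ _ _ => rfl

def HIso.symm {H K : Hypergraph C tc} (φ : HIso H K) : HIso K H where
  vE := φ.vE.symm
  eE := φ.eE.symm
  lab_eq := fun e => by rw [← φ.lab_eq, Equiv.apply_symm_apply]
  att_eq := fun e σ h h' => by
    have he : φ.eE (φ.eE.symm e) = e := φ.eE.apply_symm_apply e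
    have h₂ : σ ∈ tc (K.lab (φ.eE (φ.eE.symm e))) := by rw [he]; exact h
    have hh := φ.att_eq (φ.eE.symm e) σ h' h₂
    rw [Equiv.eq_symm_apply, ← hh]
    congr 1
  extType_eq := by rw [← φ.extType_eq]
  ext_eq := fun σ h h' => by
    rw [Equiv.eq_symm_apply, φ.ext_eq σ h' h]
  
def HIso.trans {H K L : Hypergraph C tc} (φ : HIso H K) (ψ : HIso K L) : HIso H L where
  vE := φ.vE.trans ψ.vE
  eE := φ.eE.trans ψ.eE
  lab_eq := fun e => by rw [Equiv.trans_apply, ψ.lab_eq, φ.lab_eq]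
  att_eq := fun e σ h h' => by
    have h₂ : σ ∈ tc (K.lab (φ.eE e)) := φ.lab_eq e ▸ h
    show L.att (ψ.eE (φ.eE e)) σ h' = ψ.vE (φ.vE (H.att e σ h))
    rw [ψ.att_eq (φ.eE e) σ h₂ h', φ.att_eq e σ h h₂]
  extType_eq := by rw [ψ.extType_eq, φ.extType_eq]
  ext_eq := fun σ h h' => by
    have h₂ : σ ∈ K.extType := φ.extType_eq ▸ h
    show L.ext σ h' = ψ.vE (φ.vE (H.ext σ h))
    rw [ψ.ext_eq σ h₂ h', φ.ext_eq σ h h₂]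

end Aux
section Aux2
variable {C : Type u} {tc : C → Finset ℕ}

def replaceIso {H K : Hypergraph C tc} (φ : HIso H K) (e : H.E) (D : Hypergraph C tc) :
    HIso (replace H e D) (replace K (φ.eE e) D) where
  vE := Quot.congr (Equiv.sumCongr φ.vE (Equiv.refl D.V)) (by
    rintro x y
    constructor
    · rintro ⟨σ, h, h', rfl, rfl⟩
      have h₂ : σ ∈ tc (K.lab (φ.eE e)) := φ.lab_eq e ▸ h
      exact ⟨σ, h₂, h', by rw [φ.att_eq e σ h h₂]; rfl, rfl⟩
    · rintro ⟨σ, h, h', hx, hy⟩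
      have h₂ : σ ∈ tc (H.lab e) := by rw [← φ.lab_eq e]; exact h
      refine ⟨σ, h₂, h', ?_, ?_⟩
      · rcases x with v | v
        · simp only [Equiv.sumCongr_apply, Sum.map_inl, Sum.inl.injEq] at hx ⊢
          apply φ.vE.injective
          rw [hx, φ.att_eq e σ h₂ h]
        · simp at hx
      · rcases y with v | v
        · simp at hy
        · simp only [Equiv.sumCongr_apply, Sum.map_inr, Sum.inr.injEq] at hy ⊢
          exact hy)
  eE := Equiv.sumCongr
    (φ.eE.subtypeEquiv (fun e' => by
      constructor
      · intro hne hc; exact hne (φ.eE.injective hc)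
      · intro hne hc; exact hne (by rw [hc])))
    (Equiv.refl D.E)
  lab_eq := by
    rintro (e' | d)
    · exact φ.lab_eq e'.1
    · rfl
  att_eq := by
    rintro (e' | d) σ h h'
    · show Quot.mk _ (Sum.inl (K.att (φ.eE e'.1) σ h')) = _
      rw [φ.att_eq e'.1 σ h h']
      rfl
    · rfl
  extType_eq := φ.extType_eq
  ext_eq := fun σ h h' => by
    show Quot.mk _ (Sum.inl (K.ext σ h')) = _
    rw [φ.ext_eq σ h h']
    rfl

end Aux2
section Aux3
variable {C : Type u} {tc : C → Finset ℕ}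

def replaceIsoRight (H : Hypergraph C tc) (e : H.E) {D D' : Hypergraph C tc}
    (ψ : HIso D D') : HIso (replace H e D) (replace H e D') where
  vE := Quot.congr (Equiv.sumCongr (Equiv.refl H.V) ψ.vE) (by
    rintro x y
    constructor
    · rintro ⟨σ, h, h', rfl, rfl⟩
      have h₂ : σ ∈ D'.extType := ψ.extType_eq ▸ h'
      exact ⟨σ, h, h₂, rfl, by rw [ψ.ext_eq σ h' h₂]; rfl⟩
    · rintro ⟨σ, h, h', hx, hy⟩
      have h₂ : σ ∈ D.extType := by rw [← ψ.extType_eq]; exact h'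
      refine ⟨σ, h, h₂, ?_, ?_⟩
      · rcases x with v | v
        · simpa using hx
        · simp at hx
      · rcases y with v | v
        · simp at hy
        · simp only [Equiv.sumCongr_apply, Sum.map_inr, Sum.inr.injEq] at hy ⊢
          apply ψ.vE.injective
          rw [hy, ψ.ext_eq σ h₂ h'])
  eE := Equiv.sumCongr (Equiv.refl _) ψ.eE
  lab_eq := by
    rintro (e' | d)
    · rfl
    · exact ψ.lab_eq d
  att_eq := by
    rintro (e' | d) σ h h'
    · rfl
    · show Quot.mk _ (Sum.inr (D'.att (ψ.eE d) σ h')) = _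
      rw [ψ.att_eq d σ h h']
      rfl
  extType_eq := rfl
  ext_eq := fun σ h h' => rfl

variable {n : ℕ}

abbrev SubN (n : ℕ) := {j : ℕ // j ∈ Finset.Icc 1 n}

abbrev Fg (n : ℕ) (c : Bool) (h : Equiv.Perm (SubN n)) :
    Hypergraph Bool (fun _ : Bool => Finset.Icc 1 n) :=
  Fgraph c n rfl (permToFun h) (permToFun_mem h)

theorem permToFun_apply (h : Equiv.Perm (SubN n)) (v : SubN n) :
    permToFun h v.1 = (h v).1 := by
  simp [permToFun, v.2]

def handleIso (n : ℕ) (c : Bool) : HIso (handle (tc := fun _ : Bool => Finset.Icc 1 n) c)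
    (Fg n c 1) where
  vE := Equiv.refl _
  eE := Equiv.refl _
  lab_eq := fun _ => rfl
  att_eq := fun e σ h h' => by
    show (⟨permToFun 1 σ, _⟩ : SubN n) = ⟨σ, h⟩
    exact Subtype.ext (permToFun_apply 1 ⟨σ, h⟩)
  extType_eq := rfl
  ext_eq := fun σ h h' => rfl

/-- vertex equiv of the glued graph -/
def glueV (h p : Equiv.Perm (SubN n)) (c : Bool) :
    Quot (glueRel (Fg n true h) PUnit.unit (Fg n c p)) ≃ SubN n where
  toFun := Quot.lift (Sum.elim id (fun w => h w)) (by
    rintro x y ⟨σ, hσ, hσ', rfl, rfl⟩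
    show (⟨permToFun h σ, _⟩ : SubN n) = h ⟨σ, hσ'⟩
    exact Subtype.ext (permToFun_apply h ⟨σ, hσ'⟩))
  invFun := fun v => Quot.mk _ (Sum.inl v)
  left_inv := by
    rintro ⟨v | w⟩
    · rfl
    · show Quot.mk _ (Sum.inl (h w)) = Quot.mk _ (Sum.inr w)
      apply Quot.sound
      refine ⟨w.1, w.2, w.2, ?_, ?_⟩
      · exact congrArg Sum.inl (Subtype.ext (permToFun_apply h w).symm)
      · rfl
  right_inv := fun v => rfl

end Aux3
section Aux4
variable {n : ℕ}

def glueIso (h p : Equiv.Perm (SubN n)) (c : Bool) :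
    HIso (replace (Fg n true h) PUnit.unit (Fg n c p)) (Fg n c (h * p)) where
  vE := glueV h p c
  eE := {
    toFun := fun _ => PUnit.unit
    invFun := fun _ => Sum.inr PUnit.unit
    left_inv := by
      rintro (⟨⟨⟩, he⟩ | ⟨⟩)
      · exact absurd rfl he
      · rfl
    right_inv := fun _ => rfl }
  lab_eq := by
    rintro (⟨⟨⟩, he⟩ | ⟨⟩)
    · exact absurd rfl he
    · rfl
  att_eq := by
    rintro (⟨⟨⟩, he⟩ | ⟨⟩) σ hm hm'
    · exact absurd rfl he
    · show (⟨permToFun (h * p) σ, _⟩ : SubN n) = h ⟨permToFun p σ, _⟩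
      have h1 : (⟨permToFun p σ, permToFun_mem p σ hm⟩ : SubN n) = p ⟨σ, hm⟩ :=
        Subtype.ext (permToFun_apply p ⟨σ, hm⟩)
      rw [h1]
      exact Subtype.ext (permToFun_apply (h * p) ⟨σ, hm⟩)
  extType_eq := rfl
  ext_eq := fun σ hm hm' => rfl

end Aux4
section Aux5
variable {n : ℕ} (f g : Equiv.Perm (SubN n))

def Reach (h : Equiv.Perm (SubN n)) : Prop :=
  ∃ H', Derives (permGrammar n f g) (handle true) H' ∧ IsIso H' (Fg n true h)

theorem reach_one : Reach f g 1 :=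
  ⟨handle true, Relation.ReflTransGen.refl, ⟨handleIso n true⟩⟩

theorem step_mk {h : Equiv.Perm (SubN n)} {H'} (φ : HIso H' (Fg n true h))
    {D} (hD : ((true : Bool), D) ∈ (permGrammar n f g).P) :
    Step (permGrammar n f g) H' (replace H' (φ.eE.symm PUnit.unit) D) :=
  ⟨φ.eE.symm PUnit.unit, (true, D), hD, (φ.lab_eq _).symm, rfl⟩

theorem reach_mul {h p : Equiv.Perm (SubN n)}
    (hD : ((true : Bool), Fg n true p) ∈ (permGrammar n f g).P) :
    Reach f g h → Reach f g (h * p) := by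
  rintro ⟨H', hd, ⟨φ⟩⟩
  refine ⟨replace H' (φ.eE.symm PUnit.unit) (Fg n true p),
    hd.tail (step_mk f g φ hD), ⟨?_⟩⟩
  exact (replaceIso φ (φ.eE.symm PUnit.unit) (Fg n true p)).trans (glueIso h p true)

theorem reach_term {h : Equiv.Perm (SubN n)} :
    Reach f g h →
    ∃ H'', Derives (permGrammar n f g) (handle true) H'' ∧ IsIso H'' (Fg n false h) := by
  rintro ⟨H', hd, ⟨φ⟩⟩
  have hD : ((true : Bool), (handle false : Hypergraph Bool (fun _ => Finset.Icc 1 n)))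
      ∈ (permGrammar n f g).P := by
    right; right; rfl
  refine ⟨replace H' (φ.eE.symm PUnit.unit) (handle false),
    hd.tail (step_mk f g φ hD), ⟨?_⟩⟩
  have ι := ((replaceIso φ (φ.eE.symm PUnit.unit) (handle false)).trans
    ((replaceIsoRight (Fg n true h) PUnit.unit (handleIso n false)).trans
      (glueIso h 1 false)))
  have he : Fg n false (h * 1) = Fg n false h := by rw [mul_one]
  exact he ▸ ι

end Aux5
section Aux6
variable {n : ℕ} (f g : Equiv.Perm (SubN n))

theorem derives_inv {H' : Hypergraph Bool (fun _ : Bool => Finset.Icc 1 n)}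
    (hd : Derives (permGrammar n f g) (handle true) H') :
    (∃ h, IsIso H' (Fg n true h)) ∨ (∃ h, IsIso H' (Fg n false h)) := by
  induction hd with
  | refl => exact Or.inl ⟨1, ⟨handleIso n true⟩⟩
  | tail _ hstep ih =>
    obtain ⟨e, q, hq, hlab, rfl⟩ := hstep
    rcases ih with ⟨h, ⟨φ⟩⟩ | ⟨h, ⟨φ⟩⟩
    · rcases hq with rfl | rfl | rfl
      · exact Or.inl ⟨h * f, ⟨(replaceIso φ e (Fg n true f)).trans (glueIso h f true)⟩⟩
      · exact Or.inl ⟨h * g, ⟨(replaceIso φ e (Fg n true g)).trans (glueIso h g true)⟩⟩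
      · refine Or.inr ⟨h, ⟨?_⟩⟩
        have ι := (replaceIso φ e (handle false)).trans
          ((replaceIsoRight (Fg n true h) (φ.eE e) (handleIso n false)).trans
            (glueIso h 1 false))
        have he : Fg n false (h * 1) = Fg n false h := by rw [mul_one]
        exact he ▸ ι
    · rcases hq with rfl | rfl | rfl <;>
        exact absurd ((φ.lab_eq e).trans hlab) Bool.false_ne_true

theorem perm_reach
    (hgen : Subgroup.closure {f, g} = (⊤ : Subgroup (Equiv.Perm (SubN n))))
    (h : Equiv.Perm (SubN n)) : Reach f g h := by
  have hmem : h ∈ Subgroup.closure ({f, g} : Set _) := hgen ▸ Subgroup.mem_top h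
  have hmon : h ∈ Submonoid.closure ({f, g} : Set (Equiv.Perm (SubN n))) := by
    induction hmem using Subgroup.closure_induction with
    | mem x hx => exact Submonoid.subset_closure hx
    | one => exact one_mem _
    | mul x y hx hy ihx ihy => exact mul_mem ihx ihy
    | inv x hx ih =>
      have hpos : 0 < orderOf x := orderOf_pos x
      have h1 : x ^ (orderOf x - 1) * x = 1 := by
        rw [← pow_succ, Nat.sub_add_cancel hpos, pow_orderOf_eq_one]
      have h2 : x⁻¹ = x ^ (orderOf x - 1) := (eq_inv_of_mul_eq_one_left h1).symm
      rw [h2]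
      exact pow_mem ih _
  have key : ∀ (x : Equiv.Perm (SubN n)), x ∈ Submonoid.closure ({f, g} : Set _) →
      ∀ h₀, Reach f g h₀ → Reach f g (h₀ * x) := by
    intro x hx
    induction hx using Submonoid.closure_induction_right with
    | one => intro h₀ hr; rwa [mul_one]
    | mul_right y hy z hz ih =>
      intro h₀ hr
      have hr2 := ih h₀ hr
      rw [← mul_assoc]
      rcases hz with hz | hz
      · rw [hz]; exact reach_mul f g (by left; rfl) hr2
      · rw [hz]; exact reach_mul f g (by right; left; rfl) hr2
  have := key h hmon 1 (reach_one f g)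
  rwa [one_mul] at this

end Aux6

/-- If the permutations `f, g` generate the full symmetric group on `[n]`,
then the language of the 3-production grammar `G` consists precisely of the hypergraphs
`F(a, h)` for permutations `h` of `[n]`; distinct permutations give non-isomorphic
hypergraphs, so `L(G)` contains exactly `n!` pairwise non-isomorphic hypergraphs, whereas
`G` has only (at most) `3` productions. -/
theorem stmt_2 (n : ℕ) (hn : 1 ≤ n) (f g : Equiv.Perm {j : ℕ // j ∈ Finset.Icc 1 n})
    (hgen : Subgroup.closure {f, g} = (⊤ : Subgroup (Equiv.Perm {j : ℕ // j ∈ Finset.Icc 1 n}))) :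
    Lang (permGrammar n f g) =
      {H | ∃ h : Equiv.Perm {j : ℕ // j ∈ Finset.Icc 1 n},
        IsIso H (Fgraph false n rfl (permToFun h) (permToFun_mem h))} ∧
    (∀ h h' : Equiv.Perm {j : ℕ // j ∈ Finset.Icc 1 n},
      IsIso (Fgraph (tc := fun _ : Bool => Finset.Icc 1 n) false n rfl
              (permToFun h) (permToFun_mem h))
            (Fgraph false n rfl (permToFun h') (permToFun_mem h')) ↔ h = h') ∧
    Nat.card (Equiv.Perm {j : ℕ // j ∈ Finset.Icc 1 n}) = Nat.factorial n ∧
    Nat.card (permGrammar n f g).P ≤ 3 := by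
  refine ⟨?_, ?_, ?_, ?_⟩
  · -- language characterization
    ext H
    constructor
    · rintro ⟨hterm, H', hd, ⟨ψ⟩⟩
      rcases derives_inv f g hd with ⟨h, ⟨φ⟩⟩ | ⟨h, ⟨φ⟩⟩
      · exfalso
        set e₀ := φ.eE.symm PUnit.unit with he₀
        have h1 : H'.lab e₀ = true := (φ.lab_eq e₀).symm
        exact hterm (ψ.eE e₀) ((ψ.lab_eq e₀).trans h1)
      · exact ⟨h, ⟨ψ.symm.trans φ⟩⟩
    · rintro ⟨h, ⟨φ⟩⟩
      refine ⟨?_, ?_⟩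
      · intro e hc
        exact Bool.false_ne_true ((φ.lab_eq e).trans hc)
      · obtain ⟨H'', hd, ⟨ι⟩⟩ := reach_term f g (perm_reach f g hgen h)
        exact ⟨H'', hd, ⟨ι.trans φ.symm⟩⟩
  · -- isomorphism iff equality
    intro h h'
    constructor
    · rintro ⟨φ⟩
      have hv : ∀ v : SubN n, φ.vE v = v := fun v => (φ.ext_eq v.1 v.2 v.2).symm
      apply Equiv.ext
      intro v
      have hm : v.1 ∈ (fun _ : Bool => Finset.Icc 1 n)
          ((Fg n false h).lab PUnit.unit) := v.2
      have hm' : v.1 ∈ (fun _ : Bool => Finset.Icc 1 n)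
          ((Fg n false h').lab (φ.eE PUnit.unit)) := v.2
      have ha := φ.att_eq PUnit.unit v.1 hm hm'
      replace ha := ha.trans (hv _)
      have hval : permToFun h' v.1 = permToFun h v.1 := congrArg Subtype.val ha
      rw [permToFun_apply h' v, permToFun_apply h v] at hval
      exact Subtype.ext hval.symm
    · rintro rfl
      exact ⟨HIso.refl _⟩
  · -- cardinality
    haveI : Fintype {j : ℕ // j ∈ Finset.Icc 1 n} := FinsetCoe.fintype _
    rw [Nat.card_eq_fintype_card, Fintype.card_perm]
    congr 1
    have hc : Fintype.card {j : ℕ // j ∈ Finset.Icc 1 n} = (Finset.Icc 1 n).card :=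
      Fintype.card_coe _
    rw [hc, Nat.card_Icc]
    omega
  · -- number of productions
    rw [Nat.card_coe_set_eq]
    refine le_trans (Set.ncard_insert_le _ _) ?_
    have h2 := Set.ncard_insert_le ((true : Bool),
      (Fgraph true n rfl (permToFun g) (permToFun_mem g) :
        Hypergraph Bool (fun _ => Finset.Icc 1 n)))
      {((true : Bool), (handle false : Hypergraph Bool (fun _ => Finset.Icc 1 n)))}
    have h3 : ({((true : Bool), (handle false : Hypergraph Bool (fun _ => Finset.Icc 1 n)))} :
      Set (Bool × Hypergraph Bool (fun _ => Finset.Icc 1 n))).ncard = 1 := Set.ncard_singleton _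
    omega

end HRGPaper
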